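/- arXiv:1111.1609 — 2 statements merged into one kernel-verified Lean document; each statement's English description precedes it below -/
import Mathlib

section
/- Let Ξ be a right-infinite subshift over a finite alphabet with language ℒ. Then Ξ has bounded powers if and only if Ξ is repulsive, i.e. its index of repulsiveness ℓ is strictly positive. -/
open scoped ENNReal Classical

noncomputable section

namespace Arx1111

variable {A : Type*}

/-! ### Words and infinite words -/

/-- The left shift on right-infinite words. -/
def shift (ξ : ℕ → A) : ℕ → A := fun n => ξ (n + 1)

/-- The finite word `u` occurs in the infinite word `ξ` at position `k`. -/
def FactorAt (u : List A) (ξ : ℕ → A) (k : ℕ) : Prop :=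
  u = (List.range u.length).map fun i => ξ (k + i)

/-- `u` is a factor of the infinite word `ξ`. -/
def IsFactorOf (u : List A) (ξ : ℕ → A) : Prop := ∃ k, FactorAt u ξ k

/-- `u` is a prefix of the infinite word `ξ`. -/
def PrefixOfInf (u : List A) (ξ : ℕ → A) : Prop := FactorAt u ξ 0

/-- `u` is a proper prefix of `v`. -/
def PPrefix (u v : List A) : Prop := u <+: v ∧ u ≠ v

/-- The `n`-th power `u^n` of a finite word `u`. -/
def wordPow (u : List A) : ℕ → List A
  | 0 => []
  | n + 1 => u ++ wordPow u n

/-- The language of a set of infinite words: all finite factors of its elements. -/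
def language (Ξ : Set (ℕ → A)) : Set (List A) := {u | ∃ ξ ∈ Ξ, IsFactorOf u ξ}

/-! ### Subshifts -/

/-- `Ξ` is a (right-infinite) subshift: nonempty, closed, shift-invariant. -/
structure IsSubshift [TopologicalSpace A] (Ξ : Set (ℕ → A)) : Prop where
  nonempty : Ξ.Nonempty
  isClosed : IsClosed Ξ
  shift_mem : ∀ ξ ∈ Ξ, shift ξ ∈ Ξ

/-- Minimality: every orbit is dense in `Ξ`. -/
def IsMinimal [TopologicalSpace A] (Ξ : Set (ℕ → A)) : Prop :=
  ∀ ξ ∈ Ξ, Ξ ⊆ closure (Set.range fun n => shift^[n] ξ)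

/-- Aperiodicity. -/
def Aperiodic (Ξ : Set (ℕ → A)) : Prop :=
  ∀ ξ ∈ Ξ, ∀ n : ℕ, shift^[n] ξ = ξ → n = 0

/-! ### Occurrences, complete first returns, privileged words -/

variable [DecidableEq A]

/-- The number of occurrences of `u` as a factor of `w`. -/
def occCount (u w : List A) : ℕ :=
  ((List.range (w.length + 1)).filter fun k => (w.drop k).take u.length == u).length

/-- `u'` is a complete first return to `u`: if `u` is empty, `u'` is a single letter;
otherwise `u` is a prefix and a suffix of `u'` and occurs exactly twice in `u'`. -/
def IsCFR (u u' : List A) : Prop :=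
  if u = [] then u'.length = 1
  else u <+: u' ∧ u <:+ u' ∧ occCount u u' = 2

/-- Privileged words of order `n`. -/
inductive PrivOrder : ℕ → List A → Prop where
  | zero : PrivOrder 0 []
  | succ {n : ℕ} {u u' : List A} : PrivOrder n u → IsCFR u u' → PrivOrder (n + 1) u'

/-- A word is privileged if it is privileged of some order. -/
def IsPrivileged (u : List A) : Prop := ∃ n, PrivOrder n u

/-- `u'` is a complete first return to `u` inside the language `L`. -/
def CFRin (L : Set (List A)) (u u' : List A) : Prop := u' ∈ L ∧ IsCFR u u'

/-- `u` is right-special for the language `L`. -/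
def RightSpecial (L : Set (List A)) (u : List A) : Prop :=
  u ∈ L ∧ ∃ a b : A, a ≠ b ∧ u ++ [a] ∈ L ∧ u ++ [b] ∈ L

/-- `a(v)`: number of one-letter right extensions of `v` in `L`, minus one. -/
def aext (L : Set (List A)) (v : List A) : ℕ := Nat.card {a : A // v ++ [a] ∈ L} - 1

/-- `ã(v)`: number of complete first returns to `v` in `L`, minus one, if `v` is
privileged, and `0` otherwise. -/
def atil (L : Set (List A)) (v : List A) : ℕ :=
  if IsPrivileged v then Nat.card {u' : List A // CFRin L v u'} - 1 else 0

/-- `S(u)`: right-special words `r` with `u ⪯ r ≺ u'` for some complete first return `u'`. -/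
def Sset (L : Set (List A)) (u : List A) : Set (List A) :=
  {r | RightSpecial L r ∧ ∃ u', CFRin L u u' ∧ u <+: r ∧ PPrefix r u'}

/-- Right-special balanced: between a privileged word and any of its complete first
returns there is exactly one right-special word. -/
def RSBalanced (L : Set (List A)) : Prop :=
  ∀ u, IsPrivileged u → u ∈ L → ∀ u', CFRin L u u' →
    ∃! r, RightSpecial L r ∧ u <+: r ∧ PPrefix r u'

/-- `r'` is the shortest right-special word having `r` as a proper prefix. -/
def IsShortestRSExt (L : Set (List A)) (r r' : List A) : Prop :=
  RightSpecial L r' ∧ PPrefix r r' ∧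
    ∀ r'', RightSpecial L r'' → PPrefix r r'' → r'.length ≤ r''.length

/-- `r = φ⁽⁰⁾(u)`: `r` is the shortest right-special word having `u` as a prefix. -/
def IsPhi0 (L : Set (List A)) (u r : List A) : Prop :=
  RightSpecial L r ∧ u <+: r ∧ ∀ r', RightSpecial L r' → u <+: r' → r.length ≤ r'.length

/-- `H⁽¹⁾`: pairs of distinct one-letter right extensions of a common word. -/
def H1 (L : Set (List A)) (v₁ v₂ : List A) : Prop :=
  v₁ ∈ L ∧ v₂ ∈ L ∧ v₁ ≠ v₂ ∧ ∃ (w : List A) (a b : A), v₁ = w ++ [a] ∧ v₂ = w ++ [b]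

/-- `H̃⁽¹⁾`: pairs of distinct complete first returns to a common privileged word. -/
def TildeH1 (L : Set (List A)) (u₁ u₂ : List A) : Prop :=
  u₁ ≠ u₂ ∧ ∃ u, IsPrivileged u ∧ CFRin L u u₁ ∧ CFRin L u u₂

/-- Length of the longest common prefix of two finite words. -/
def lcpLenW (u v : List A) : ℕ := sSup {n | n ≤ u.length ∧ u.take n = v.take n}

/-- Length of the longest common privileged prefix of two finite words. -/
def weeLenW (u v : List A) : ℕ :=
  sSup {n | ∃ w : List A, IsPrivileged w ∧ w.length = n ∧ w <+: u ∧ w <+: v}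

/-- `φ⁽¹⁾`: the pair of one-letter extensions of `u₁ ∧ u₂` which are prefixes of
`u₁` resp. `u₂`. -/
def phi1 (u₁ u₂ : List A) : List A × List A :=
  (u₁.take (lcpLenW u₁ u₂ + 1), u₂.take (lcpLenW u₁ u₂ + 1))

/-! ### Bounded powers and repulsiveness -/

/-- Bounded powers: there is `p` such that no `(p+1)`-th power of a nonempty word
belongs to `L`. -/
def BoundedPowers (L : Set (List A)) : Prop :=
  ∃ p : ℕ, ∀ u ∈ L, u ≠ [] → wordPow u (p + 1) ∉ L

/-- The set of ratios `(|W|-|w|)/|w|` over words `w, W ∈ L` with `w` a nonempty proper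
prefix and a suffix of `W`. -/
def repulsionSet (L : Set (List A)) : Set ℝ :=
  {x | ∃ w W : List A, w ∈ L ∧ W ∈ L ∧ w ≠ [] ∧ PPrefix w W ∧ w <:+ W ∧
        x = ((W.length : ℝ) - (w.length : ℝ)) / (w.length : ℝ)}

/-- The index of repulsiveness `ℓ`. -/
def repulsionIndex (L : Set (List A)) : ℝ := sInf (repulsionSet L)

/-- Repulsive: `ℓ > 0`. -/
def Repulsive (L : Set (List A)) : Prop := 0 < repulsionIndex L

/-! ### Privileged prefixes of infinite words -/

/-- The `n`-th privileged prefix `ξ̃ₙ` of an infinite word `ξ`. -/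
def privPrefix (ξ : ℕ → A) : ℕ → List A
  | 0 => []
  | n + 1 =>
    if h : ∃ u', IsCFR (privPrefix ξ n) u' ∧ PrefixOfInf u' ξ then h.choose
    else privPrefix ξ n

/-- The order `ind(ξ ⩏ η)` of the longest common privileged prefix of two infinite
words; the word `ξ ⩏ η` itself is `privPrefix ξ (weeInd ξ η)`. -/
def weeInd (ξ η : ℕ → A) : ℕ := sSup {n | privPrefix ξ n = privPrefix η n}

/-- Length of the longest common prefix `ξ ∧ η` of two distinct infinite words. -/
def lcpLenInf (ξ η : ℕ → A) : ℕ := sInf {n | ξ n ≠ η n}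

/-! ### Choice functions, weight functions and the metrics -/

/-- A choice function for `Ξ`. -/
def IsChoiceFun (Ξ : Set (ℕ → A)) (τ : List A → ℕ → A) : Prop :=
  (∀ v ∈ language Ξ, τ v ∈ Ξ ∧ PrefixOfInf v (τ v)) ∧
  (∀ v ∈ language Ξ, ∀ w ∈ language Ξ, v.length < w.length →
    PrefixOfInf w (τ v) → τ w = τ v)

/-- A weight function. -/
structure IsWeight (δ : ℕ → ℝ) : Prop where
  pos : ∀ n, 0 < δ n
  strictAnti : StrictAnti δ
  tendsto_zero : Filter.Tendsto δ Filter.atTop (nhds 0)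
  submul : ∃ c : ℝ, 0 < c ∧ ∀ a b : ℕ, δ (a * b) ≤ c * δ a * δ b
  doubling : ∃ c : ℝ, 0 < c ∧ ∀ a : ℕ, c * δ a ≤ δ (2 * a)

variable [TopologicalSpace A]

/-- The metric `d_τ` associated to the right-special horizontal edges. -/
def dTau (Ξ : Set (ℕ → A)) (δ : ℕ → ℝ) (τ : List A → ℕ → A) (ξ η : ℕ → A) : ℝ≥0∞ :=
  ⨆ f : {f : (ℕ → A) → ℝ // ContinuousOn f Ξ ∧
      ∀ v₁ v₂, H1 (language Ξ) v₁ v₂ → |f (τ v₁) - f (τ v₂)| ≤ δ (lcpLenW v₁ v₂)},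
    ENNReal.ofReal |f.1 ξ - f.1 η|

/-- The metric `d̃_τ` associated to the privileged horizontal edges. -/
def dTilTau (Ξ : Set (ℕ → A)) (δ : ℕ → ℝ) (τ : List A → ℕ → A) (ξ η : ℕ → A) : ℝ≥0∞ :=
  ⨆ f : {f : (ℕ → A) → ℝ // ContinuousOn f Ξ ∧
      ∀ u₁ u₂, TildeH1 (language Ξ) u₁ u₂ → |f (τ u₁) - f (τ u₂)| ≤ δ (weeLenW u₁ u₂)},
    ENNReal.ofReal |f.1 ξ - f.1 η|

/-- `d_inf`. -/
def dInf (Ξ : Set (ℕ → A)) (δ : ℕ → ℝ) (ξ η : ℕ → A) : ℝ≥0∞ :=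
  ⨅ τ : {τ // IsChoiceFun Ξ τ}, dTau Ξ δ τ.1 ξ η

/-- `d_sup`. -/
def dSup (Ξ : Set (ℕ → A)) (δ : ℕ → ℝ) (ξ η : ℕ → A) : ℝ≥0∞ :=
  ⨆ τ : {τ // IsChoiceFun Ξ τ}, dTau Ξ δ τ.1 ξ η

/-- `d̃_inf`. -/
def dTilInf (Ξ : Set (ℕ → A)) (δ : ℕ → ℝ) (ξ η : ℕ → A) : ℝ≥0∞ :=
  ⨅ τ : {τ // IsChoiceFun Ξ τ}, dTilTau Ξ δ τ.1 ξ η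

/-- `d̃_sup`. -/
def dTilSup (Ξ : Set (ℕ → A)) (δ : ℕ → ℝ) (ξ η : ℕ → A) : ℝ≥0∞ :=
  ⨆ τ : {τ // IsChoiceFun Ξ τ}, dTilTau Ξ δ τ.1 ξ η

/-- `β̃_τ(ξ̃ₙ)`: equals `1` if the longest common privileged prefix of `τ(ξ̃ₙ)` and `ξ`
is `ξ̃ₙ`, and `0` otherwise. -/
def btil (τ : List A → ℕ → A) (ξ : ℕ → A) (n : ℕ) : ℝ≥0∞ :=
  if privPrefix (τ (privPrefix ξ n)) (weeInd (τ (privPrefix ξ n)) ξ) = privPrefix ξ n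
  then 1 else 0

/-! ### Zeta functions -/

/-- `ζ_k(s)` (with the convention `0⁰ = 0`). -/
def zeta (L : Set (List A)) (δ : ℕ → ℝ) (k : ℕ) (s : ℝ) : ℝ≥0∞ :=
  ∑' v : L, (if aext L (v : List A) = 0 then 0 else ((aext L (v : List A) : ℝ≥0∞)) ^ k) *
    ENNReal.ofReal (δ (v : List A).length ^ s)

/-- `ζ̃_k(s)` (with the convention `0⁰ = 0`). -/
def zetaTil (L : Set (List A)) (δ : ℕ → ℝ) (k : ℕ) (s : ℝ) : ℝ≥0∞ :=
  ∑' v : L, (if atil L (v : List A) = 0 then 0 else ((atil L (v : List A) : ℝ≥0∞)) ^ k) *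
    ENNReal.ofReal (δ (v : List A).length ^ s)

/-- Almost finite privileged rank. -/
def AlmostFiniteRank (L : Set (List A)) : Prop :=
  ∃ a b : ℝ, 0 < a ∧ 0 < b ∧ ∀ u, IsPrivileged u → u ∈ L → 2 ≤ u.length →
    (Nat.card {u' : List A // CFRin L u u'} : ℝ) ≤ a * (Real.log u.length) ^ b


lemma factorAt_iff {u : List A} {ξ : ℕ → A} {k : ℕ} :
    FactorAt u ξ k ↔ ∀ i (h : i < u.length), u[i] = ξ (k + i) := by
  constructor
  · intro h i hi
    rw [List.getElem_of_eq h (by simpa using hi)]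
    simp
  · intro h
    apply List.ext_getElem (by simp)
    intro i h1 h2
    simp [h i h1]

lemma mem_language_of_infix {Ξ : Set (ℕ → A)} {u v : List A} (h : v ∈ language Ξ)
    (hinf : u <:+: v) : u ∈ language Ξ := by
  obtain ⟨ξ, hξ, k, hk⟩ := h
  obtain ⟨s, t, rfl⟩ := hinf
  refine ⟨ξ, hξ, k + s.length, factorAt_iff.mpr ?_⟩
  intro i hi
  have hlen : s.length + i < (s ++ u ++ t).length := by simp; omega
  have h2 := factorAt_iff.mp hk (s.length + i) hlen
  have h3 : (s ++ u ++ t)[s.length + i]'hlen = u[i]'hi := by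
    rw [List.getElem_append_left (by simp; omega), List.getElem_append_right (by omega)]
    congr 1
    omega
  rw [← h3, h2]
  congr 1
  omega

lemma wordPow_length (u : List A) : ∀ n, (wordPow u n).length = n * u.length
  | 0 => by simp [wordPow]
  | n + 1 => by simp [wordPow, wordPow_length u n]; ring

lemma wordPow_succ' (u : List A) : ∀ n, wordPow u (n + 1) = wordPow u n ++ u
  | 0 => by simp [wordPow]
  | n + 1 => by
    show u ++ wordPow u (n+1) = (u ++ wordPow u n) ++ u
    rw [wordPow_succ' u n, List.append_assoc]

lemma wordPow_getElem (u : List A) (hu : u ≠ []) :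
    ∀ n j (h : j < (wordPow u n).length),
      (wordPow u n)[j] = u[j % u.length]'(Nat.mod_lt _ (List.length_pos_iff.mpr hu))
  | 0, j, h => by simp [wordPow] at h
  | n + 1, j, h => by
    have h0 : j < (u ++ wordPow u n).length := h
    show (u ++ wordPow u n)[j]'h0 = _
    by_cases hj : j < u.length
    · rw [List.getElem_append_left hj]
      congr 1
      exact (Nat.mod_eq_of_lt hj).symm
    · push_neg at hj
      have h' : j - u.length < (wordPow u n).length := by
        have hh := h
        rw [wordPow_length, Nat.succ_mul] at hh
        rw [wordPow_length]
        omega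
      rw [List.getElem_append_right hj, wordPow_getElem u hu n _ h']
      congr 1
      conv_rhs => rw [show j = (j - u.length) + u.length by omega]
      rw [Nat.add_mod_right]

lemma periodic_mod {ξ : ℕ → A} {k q N : ℕ} (hq : 0 < q)
    (hper : ∀ i, i + q < N → ξ (k + q + i) = ξ (k + i)) :
    ∀ j, j < N → ξ (k + j) = ξ (k + j % q) := by
  intro j
  induction j using Nat.strong_induction_on with
  | _ j ih =>
    intro hj
    by_cases h : j < q
    · rw [Nat.mod_eq_of_lt h]
    · push_neg at h
      have h1 : (j - q) + q < N := by omega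
      have h2 := hper (j - q) h1
      have e : k + q + (j - q) = k + j := by omega
      rw [e] at h2
      rw [h2, ih (j - q) (by omega) (by omega)]
      congr 1
      conv_rhs => rw [show j = (j - q) + q by omega]
      rw [Nat.add_mod_right]

lemma pow_mem_language {Ξ : Set (ℕ → A)} {W w : List A} (hW : W ∈ language Ξ)
    (hpre : w <+: W) (hsuf : w <:+ W) (hlt : w.length < W.length) (m : ℕ)
    (hm : m * (W.length - w.length) ≤ W.length) :
    wordPow (W.take (W.length - w.length)) m ∈ language Ξ := by
  set q := W.length - w.length with hqdef
  have hq : 0 < q := by omega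
  obtain ⟨ξ, hξ, k, hk⟩ := hW
  have hWE := factorAt_iff.mp hk
  -- periodicity
  obtain ⟨t, ht⟩ := hsuf
  have htlen : t.length = q := by
    have := congrArg List.length ht
    simp at this
    omega
  have hper : ∀ i, i + q < W.length → ξ (k + q + i) = ξ (k + i) := by
    intro i hi
    have hiw : i < w.length := by omega
    have e1 : w[i]'hiw = ξ (k + i) := by
      rw [hpre.getElem hiw]
      exact hWE i (by omega)
    have hqi : q + i < W.length := by omega
    have e2 : w[i]'hiw = ξ (k + q + i) := by
      have e3 : W[q + i]'hqi = w[i]'hiw := by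
        conv_lhs => rw [List.getElem_of_eq ht.symm (by omega)]
        rw [List.getElem_append_right (by omega)]
        congr 1
        omega
      rw [← e3, hWE (q + i) hqi]
      congr 1
      omega
    rw [← e1, ← e2]
  have hmod := periodic_mod hq hper
  set u := W.take q with hu
  have hulen : u.length = q := by rw [hu, List.length_take]; omega
  have hune : u ≠ [] := by
    intro h; rw [h] at hulen; simp at hulen; omega
  refine ⟨ξ, hξ, k, factorAt_iff.mpr ?_⟩
  intro j hj
  have hjlt : j < m * q := by rwa [wordPow_length, hulen] at hj
  have hjW : j < W.length := lt_of_lt_of_le hjlt hm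
  have key : ∀ (i : ℕ) (hi : i < q), u[i]'(by omega) = ξ (k + i) := by
    intro i hi
    have e : u[i]'(by omega) = W[i]'(by omega) := List.getElem_take ..
    rw [e, hWE i (by omega)]
  rw [wordPow_getElem u hune m j hj]
  simp only [hulen]
  rw [key (j % q) (Nat.mod_lt _ hq), ← hmod j hjW]


lemma repulsionSet_nonempty [Fintype A] {Ξ : Set (ℕ → A)} (hne : Ξ.Nonempty) :
    (repulsionSet (language Ξ)).Nonempty := by
  obtain ⟨ξ, hξ⟩ := hne
  have hni : ¬ Function.Injective (fun i : Fin (Fintype.card A + 1) => ξ i) := by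
    intro hinj
    have := Fintype.card_le_of_injective _ hinj
    simp at this
  rw [Function.not_injective_iff] at hni
  obtain ⟨a, b, hab, hne'⟩ := hni
  -- get i0 < j0 with ξ i0 = ξ j0
  obtain ⟨i0, j0, hij, hlt⟩ : ∃ i0 j0 : ℕ, ξ i0 = ξ j0 ∧ i0 < j0 := by
    rcases lt_or_gt_of_ne (fun h => hne' (by exact_mod_cast h)) with h | h
    · exact ⟨a, b, hab, by exact_mod_cast h⟩
    · exact ⟨b, a, hab.symm, by exact_mod_cast h⟩
  set n := j0 - i0 with hn
  have hn1 : 1 ≤ n := by omega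
  set W : List A := (List.range (n + 1)).map (fun t => ξ (i0 + t)) with hW
  have hWlen : W.length = n + 1 := by simp [hW]
  have hWmem : W ∈ language Ξ := by
    refine ⟨ξ, hξ, i0, ?_⟩
    rw [FactorAt, hWlen]
  have hWcons : W = ξ i0 :: (List.range n).map (fun t => ξ (i0 + (t + 1))) := by
    rw [hW, List.range_succ_eq_map, List.map_cons, List.map_map]
    simp [Function.comp_def]
  have hWsnoc : W = (List.range n).map (fun t => ξ (i0 + t)) ++ [ξ i0] := by
    rw [hW, List.range_succ, List.map_append]
    simp only [List.map_cons, List.map_nil]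
    congr 2
    rw [hij]
    congr 1
    omega
  set w : List A := [ξ i0] with hw
  have hpre : w <+: W := by rw [hWcons]; exact ⟨_, rfl⟩
  have hsuf : w <:+ W := by rw [hWsnoc]; exact ⟨_, rfl⟩
  have hwne : w ≠ W := by
    intro h
    have := congrArg List.length h
    rw [hWlen] at this
    simp [hw] at this
    omega
  refine ⟨(n : ℝ), w, W, mem_language_of_infix hWmem hpre.isInfix, hWmem, by simp [hw],
    ⟨hpre, hwne⟩, hsuf, ?_⟩
  rw [hWlen]
  simp [hw]


/-- A right-infinite subshift over a finite alphabet has bounded powers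
if and only if it is repulsive. -/
theorem statement0 {A : Type*} [Fintype A] [DecidableEq A] [TopologicalSpace A]
    [DiscreteTopology A] (Ξ : Set (ℕ → A)) (hΞ : IsSubshift Ξ) :
    BoundedPowers (language Ξ) ↔ Repulsive (language Ξ) := by
  have hbdd : BddBelow (repulsionSet (language Ξ)) := by
    refine ⟨0, fun x hx => ?_⟩
    obtain ⟨w, W, hwL, hWL, hwne, ⟨hpre, hne⟩, hsuf, hx⟩ := hx
    have h1 : w.length ≤ W.length := hpre.length_le
    rw [hx]
    exact div_nonneg (sub_nonneg.mpr (by exact_mod_cast h1)) (by positivity)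
  constructor
  · rintro ⟨p, hp⟩
    have hns := repulsionSet_nonempty hΞ.nonempty
    have hlow : ∀ x ∈ repulsionSet (language Ξ), (1 : ℝ) / (p + 1) ≤ x := by
      intro x hx
      obtain ⟨w, W, hwL, hWL, hwne, ⟨hpre, hne⟩, hsuf, rfl⟩ := hx
      set q := W.length - w.length with hq
      have hwpos : 0 < w.length := List.length_pos_iff.mpr hwne
      have hlt : w.length < W.length := by
        rcases lt_or_eq_of_le hpre.length_le with h | h
        · exact h
        · exact absurd (List.IsPrefix.eq_of_length hpre h) hne
      by_contra hcon
      push_neg at hcon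
      have hval : ((W.length : ℝ) - w.length) = (q : ℝ) := by
        rw [hq]; push_cast [Nat.cast_sub hpre.length_le]; ring
      rw [hval, div_lt_div_iff₀ (by positivity) (by positivity)] at hcon
      have hqnat : (p + 1) * q < w.length := by
        by_contra hge
        push_neg at hge
        have h5 : (w.length : ℝ) ≤ (((p + 1) * q : ℕ) : ℝ) := by exact_mod_cast hge
        push_cast at h5
        nlinarith [hcon]
      have hm : (p + 1) * q ≤ W.length := by omega
      have hu := pow_mem_language hWL hpre hsuf hlt (p + 1) hm
      have huL : W.take q ∈ language Ξ :=
        mem_language_of_infix hWL (W.take_prefix q).isInfix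
      have hune : W.take q ≠ [] := by
        have : (W.take q).length = q := by rw [List.length_take]; omega
        intro h; rw [h] at this; simp at this; omega
      exact hp _ huL hune hu
    have := le_csInf hns hlow
    exact lt_of_lt_of_le (by positivity) this
  · intro hrep
    set ℓ := repulsionIndex (language Ξ) with hl
    refine ⟨⌈ℓ⁻¹⌉₊ + 1, fun u huL hune hWu => ?_⟩
    set p := ⌈ℓ⁻¹⌉₊ + 1 with hpdef
    have hupos : 0 < u.length := List.length_pos_iff.mpr hune
    have hmem : (1 : ℝ) / p ∈ repulsionSet (language Ξ) := by
      refine ⟨wordPow u p, wordPow u (p + 1), ?_, hWu, ?_, ⟨⟨u, (wordPow_succ' u p).symm⟩, ?_⟩,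
        ⟨u, rfl⟩, ?_⟩
      · exact mem_language_of_infix hWu ⟨[], u, by rw [wordPow_succ' u p]; simp⟩
      · intro h
        have h2 := congrArg List.length h
        rw [wordPow_length] at h2
        simp only [List.length_nil] at h2
        rcases Nat.mul_eq_zero.mp h2 with h3 | h3
        · rw [hpdef] at h3; omega
        · omega
      · intro h
        rw [wordPow_succ' u p] at h
        have h2 := congrArg List.length h
        simp only [List.length_append] at h2
        omega
      · rw [wordPow_length, wordPow_length]
        have h1 : (0 : ℝ) < (p : ℝ) * u.length := by positivity
        push_cast
        field_simp
        ring
    have hle : ℓ ≤ 1 / p := csInf_le hbdd hmem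
    have hgt : ℓ⁻¹ < (p : ℝ) := by
      rw [hpdef]
      push_cast
      calc ℓ⁻¹ ≤ (⌈ℓ⁻¹⌉₊ : ℝ) := Nat.le_ceil _
      _ < ⌈ℓ⁻¹⌉₊ + 1 := by linarith
    have hppos : (0 : ℝ) < p := by positivity
    have : (1 : ℝ) / p < ℓ := by
      rw [div_lt_iff₀ hppos]
      rw [inv_lt_iff_one_lt_mul₀ hrep] at hgt
      linarith [hgt]
    linarith


end Arx1111
end
end

section
/- Every finite word u over a finite alphabet contains exactly |u|+1 distinct privileged factors (counting the empty word). -/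
open scoped ENNReal Classical

noncomputable section

namespace Arx1111

variable {A : Type*}

/-! ### Occurrences, complete first returns, privileged words -/

variable [DecidableEq A]

variable [TopologicalSpace A]

/-! ### Auxiliary development for Statement 3 -/

section Statement3Aux

variable {A : Type*} [DecidableEq A]

lemma priv_nil : IsPrivileged ([] : List A) := ⟨0, PrivOrder.zero⟩

lemma isCFR_nil_iff {w : List A} : IsCFR ([] : List A) w ↔ w.length = 1 := by
  simp [IsCFR]

lemma isCFR_iff_of_ne {u w : List A} (h : u ≠ []) :
    IsCFR u w ↔ u <+: w ∧ u <:+ w ∧ occCount u w = 2 := by simp [IsCFR, h]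

lemma priv_singleton (a : A) : IsPrivileged [a] :=
  ⟨1, PrivOrder.succ PrivOrder.zero (by simp [IsCFR])⟩

lemma IsPrivileged.cfr {u w : List A} (hu : IsPrivileged u) (h : IsCFR u w) :
    IsPrivileged w := by
  obtain ⟨n, hn⟩ := hu; exact ⟨n + 1, PrivOrder.succ hn h⟩

lemma exists_cfr_of_priv_ne_nil {w : List A} (hw : IsPrivileged w) (h : w ≠ []) :
    ∃ v, IsPrivileged v ∧ IsCFR v w := by
  obtain ⟨n, hn⟩ := hw
  cases hn with
  | zero => exact absurd rfl h
  | @succ m v _ hv hc => exact ⟨v, ⟨m, hv⟩, hc⟩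

/-- The finset of occurrence positions of `v` in `w`. -/
def occFinset (v w : List A) : Finset ℕ :=
  (Finset.range (w.length + 1)).filter fun k => v <+: w.drop k

lemma occCount_eq_card (v w : List A) : occCount v w = (occFinset v w).card := by
  have h : ∀ k ∈ List.range (w.length + 1),
      ((w.drop k).take v.length == v) = decide (v <+: w.drop k) := by
    intro k _
    rw [Bool.eq_iff_iff]
    simp only [beq_iff_eq, decide_eq_true_eq, List.prefix_iff_eq_take]
    exact eq_comm
  unfold occCount occFinset
  rw [List.filter_congr h]
  rfl

lemma occ_add_le {v w : List A} (hv : v ≠ []) {k : ℕ} (h : v <+: w.drop k) :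
    k + v.length ≤ w.length := by
  have h1 := h.length_le
  rw [List.length_drop] at h1
  have h2 : 0 < v.length := List.length_pos_iff.mpr hv
  omega

lemma mem_occFinset {v w : List A} (hv : v ≠ []) {k : ℕ} :
    k ∈ occFinset v w ↔ v <+: w.drop k := by
  simp only [occFinset, Finset.mem_filter, Finset.mem_range]
  exact ⟨fun h => h.2, fun h => ⟨by have := occ_add_le hv h; omega, h⟩⟩

lemma suffix_drop_eq {v w : List A} (h : v <:+ w) :
    w.drop (w.length - v.length) = v := (List.suffix_iff_eq_drop.mp h).symm

lemma suffix_of_suffix_le {v w p : List A} (hv : v <:+ p) (hw : w <:+ p)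
    (h : v.length ≤ w.length) : v <:+ w := by
  have h1 := suffix_drop_eq hv
  have h2 := suffix_drop_eq hw
  have hvp := hv.length_le
  have hwp := hw.length_le
  rw [List.suffix_iff_eq_drop]
  calc v = p.drop (p.length - v.length) := h1.symm
    _ = (p.drop (p.length - w.length)).drop (w.length - v.length) := by
        rw [List.drop_drop]; congr 1; omega
    _ = w.drop (w.length - v.length) := by rw [h2]

lemma cfr_length_lt {u w : List A} (hu : u ≠ []) (h : IsCFR u w) :
    u.length < w.length := by
  obtain ⟨hp, hs, hc⟩ := (isCFR_iff_of_ne hu).mp h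
  rcases lt_or_eq_of_le hp.length_le with h' | h'
  · exact h'
  · exfalso
    have hsub : occFinset u w ⊆ {0} := by
      intro k hk
      rw [mem_occFinset hu] at hk
      have := occ_add_le hu hk
      simp only [Finset.mem_singleton]
      omega
    have hle := Finset.card_le_card hsub
    rw [← occCount_eq_card, hc] at hle
    simp at hle

lemma cfr_occ_eq {u w : List A} (hu : u ≠ []) (h : IsCFR u w) {k : ℕ}
    (hk : u <+: w.drop k) : k = 0 ∨ k = w.length - u.length := by
  have hlt := cfr_length_lt hu h
  obtain ⟨hp, hs, hc⟩ := (isCFR_iff_of_ne hu).mp h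
  have h0 : (0 : ℕ) ∈ occFinset u w := (mem_occFinset hu).mpr (by simpa using hp)
  have hd : w.length - u.length ∈ occFinset u w :=
    (mem_occFinset hu).mpr (by rw [suffix_drop_eq hs])
  have hne : (0 : ℕ) ≠ w.length - u.length := by
    have := hu
    have h1 : 0 < u.length := List.length_pos_iff.mpr hu
    omega
  have hsub : ({0, w.length - u.length} : Finset ℕ) ⊆ occFinset u w := by
    intro x hx
    simp only [Finset.mem_insert, Finset.mem_singleton] at hx
    rcases hx with rfl | rfl <;> assumption
  have hcard : (occFinset u w).card ≤ ({0, w.length - u.length} : Finset ℕ).card := by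
    rw [← occCount_eq_card, hc, Finset.card_pair hne]
  have heq := Finset.eq_of_subset_of_card_le hsub hcard
  have hk' := (mem_occFinset hu).mpr hk
  rw [← heq] at hk'
  simpa using hk'

/-- A privileged suffix of a privileged word is a prefix of it. -/
lemma priv_prefix_of_suffix_aux :
    ∀ (n : ℕ) (w v : List A), w.length ≤ n → IsPrivileged w → IsPrivileged v →
      v <:+ w → v <+: w := by
  intro n
  induction n with
  | zero =>
    intro w v hl _ _ hs
    have hw : w = [] := List.length_eq_zero_iff.mp (Nat.le_zero.mp hl)
    subst hw
    rw [List.suffix_nil.mp hs]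
  | succ n ih =>
    intro w v hl hw hv hs
    by_cases hvw : v = w
    · exact hvw ▸ List.prefix_rfl
    have hlt : v.length < w.length :=
      lt_of_le_of_ne hs.length_le fun he => hvw (hs.eq_of_length he)
    by_cases hvnil : v = []
    · subst hvnil; exact List.nil_prefix
    have hwnil : w ≠ [] := by
      intro h; subst h; simp at hlt
    obtain ⟨t, htp, htc⟩ := exists_cfr_of_priv_ne_nil hw hwnil
    by_cases htnil : t = []
    · subst htnil
      rw [isCFR_nil_iff] at htc
      have : 0 < v.length := List.length_pos_iff.mpr hvnil
      omega
    obtain ⟨htpw, htsw, _⟩ := (isCFR_iff_of_ne htnil).mp htc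
    have htlt : t.length < w.length := cfr_length_lt htnil htc
    rcases le_or_gt v.length t.length with hle | hgt
    · have hvt : v <:+ t := suffix_of_suffix_le hs htsw hle
      exact (ih t v (by omega) htp hv hvt).trans htpw
    · have htv : t <:+ v := suffix_of_suffix_le htsw hs (le_of_lt hgt)
      have htpv : t <+: v := ih v t (by omega) hv htp htv
      have hocc : t <+: w.drop (w.length - v.length) := by
        rw [suffix_drop_eq hs]; exact htpv
      rcases cfr_occ_eq htnil htc hocc with h0 | hd
      · omega
      · omega

lemma priv_prefix_of_suffix {w v : List A} (hw : IsPrivileged w)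
    (hv : IsPrivileged v) (hs : v <:+ w) : v <+: w :=
  priv_prefix_of_suffix_aux w.length w v le_rfl hw hv hs

/-- The longest privileged suffix of a word. -/
noncomputable def lps (p : List A) : List A :=
  p.drop (p.length - Nat.findGreatest (fun m => IsPrivileged (p.drop (p.length - m))) p.length)

lemma lps_suffix (p : List A) : lps p <:+ p := List.drop_suffix _ _

lemma lps_priv (p : List A) : IsPrivileged (lps p) := by
  have h0 : IsPrivileged (p.drop (p.length - 0)) := by simp [priv_nil]
  exact Nat.findGreatest_spec (n := p.length)
    (P := fun m => IsPrivileged (p.drop (p.length - m))) (Nat.zero_le _) h0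

lemma lps_length (p : List A) :
    (lps p).length =
      Nat.findGreatest (fun m => IsPrivileged (p.drop (p.length - m))) p.length := by
  have hle := Nat.findGreatest_le
    (P := fun m => IsPrivileged (p.drop (p.length - m))) p.length
  simp only [lps, List.length_drop]
  omega

lemma lps_max {p v : List A} (hv : IsPrivileged v) (hs : v <:+ p) :
    v.length ≤ (lps p).length := by
  rw [lps_length]
  apply Nat.le_findGreatest hs.length_le
  rw [suffix_drop_eq hs]
  exact hv

lemma lps_ne_nil {p : List A} (hp : p ≠ []) : lps p ≠ [] := by
  have h1 : [p.getLast hp] <:+ p := by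
    conv_rhs => rw [← List.dropLast_append_getLast hp]
    exact List.suffix_append _ _
  have h2 := lps_max (priv_singleton (p.getLast hp)) h1
  intro h
  rw [h] at h2
  simp at h2

/-- The longest privileged suffix of `p` occurs only as a suffix of `p`. -/
lemma lps_occ {p : List A} (hp : p ≠ []) {k : ℕ} (hk : lps p <+: p.drop k) :
    k = p.length - (lps p).length := by
  have hvn : lps p ≠ [] := lps_ne_nil hp
  have hvl : 0 < (lps p).length := List.length_pos_iff.mpr hvn
  have hvp : (lps p).length ≤ p.length := (lps_suffix p).length_le
  have hend := occ_add_le hvn hk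
  by_contra hne
  have hkend : k + (lps p).length < p.length := by omega
  have hex : ∃ s, (lps p <+: p.drop s ∧ s + (lps p).length < p.length) ∧
      ∀ j, lps p <+: p.drop j → j + (lps p).length < p.length → j ≤ s := by
    haveI : DecidablePred fun s =>
        lps p <+: p.drop s ∧ s + (lps p).length < p.length :=
      Classical.decPred _
    refine ⟨Nat.findGreatest
        (fun s => lps p <+: p.drop s ∧ s + (lps p).length < p.length) p.length,
      Nat.findGreatest_spec (m := k)
        (P := fun s => lps p <+: p.drop s ∧ s + (lps p).length < p.length)
        (by omega) ⟨hk, hkend⟩, fun j h1 h2 => ?_⟩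
    exact Nat.le_findGreatest
      (P := fun s => lps p <+: p.drop s ∧ s + (lps p).length < p.length)
      (by omega) ⟨h1, h2⟩
  obtain ⟨s, ⟨hso, hsl⟩, hsmax⟩ := hex
  have hwlen : (p.drop s).length = p.length - s := List.length_drop
  have hwsuf : p.drop s <:+ p := List.drop_suffix _ _
  have hvw : (lps p).length < (p.drop s).length := by omega
  have hvsw : lps p <:+ p.drop s :=
    suffix_of_suffix_le (lps_suffix p) hwsuf (le_of_lt hvw)
  have hocc : ∀ j, lps p <+: (p.drop s).drop j →
      j = 0 ∨ j = (p.drop s).length - (lps p).length := by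
    intro j hj
    rw [List.drop_drop] at hj
    have hje := occ_add_le hvn hj
    rcases lt_or_eq_of_le hje with hlt' | heq'
    · have := hsmax (s + j) hj hlt'
      left; omega
    · right; omega
  have hcfr : IsCFR (lps p) (p.drop s) := by
    rw [isCFR_iff_of_ne hvn]
    refine ⟨hso, hvsw, ?_⟩
    rw [occCount_eq_card]
    have heq : occFinset (lps p) (p.drop s) =
        {0, (p.drop s).length - (lps p).length} := by
      apply Finset.Subset.antisymm
      · intro j hj
        rw [mem_occFinset hvn] at hj
        rcases hocc j hj with rfl | rfl <;> simp
      · intro j hj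
        simp only [Finset.mem_insert, Finset.mem_singleton] at hj
        rcases hj with rfl | rfl
        · rw [mem_occFinset hvn]; simpa using hso
        · rw [mem_occFinset hvn, suffix_drop_eq hvsw]
    rw [heq, Finset.card_pair (by omega)]
  have hwpriv : IsPrivileged (p.drop s) := (lps_priv p).cfr hcfr
  have hle := lps_max hwpriv hwsuf
  omega

lemma lps_nil : lps ([] : List A) = [] := List.suffix_nil.mp (lps_suffix [])

end Statement3Aux

/-- Every finite word `u` over a finite alphabet contains exactly
`|u| + 1` distinct privileged factors (counting the empty word). -/
theorem statement3 {A : Type*} [Fintype A] [DecidableEq A] (u : List A) :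
    Nat.card {v : List A // v <:+: u ∧ IsPrivileged v} = u.length + 1 := by
  classical
  have htake_len : ∀ i, i ≤ u.length → (u.take i).length = i := by
    intro i hi; rw [List.length_take]; omega
  have hg_len : ∀ i, i ≤ u.length → (lps (u.take i)).length ≤ i := by
    intro i hi
    have h1 := (lps_suffix (u.take i)).length_le
    rw [htake_len i hi] at h1
    exact h1
  -- the longest privileged suffix of `u.take i` occurs in `u` at position `i - length`
  have hg_occ : ∀ i, i ≤ u.length →
      lps (u.take i) <+: u.drop (i - (lps (u.take i)).length) := by
    intro i hi
    have h1 : (u.take i).drop (i - (lps (u.take i)).length) = lps (u.take i) := by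
      have h := suffix_drop_eq (lps_suffix (u.take i))
      rwa [htake_len i hi] at h
    have h2 : ∀ m, m ≤ i → u.drop m = (u.take i).drop m ++ u.drop i := by
      intro m hm
      conv_lhs => rw [← List.take_append_drop i u]
      rw [List.drop_append_of_le_length (by rw [htake_len i hi]; omega)]
    rw [h2 _ (by have := hg_len i hi; omega), h1]
    exact List.prefix_append _ _
  -- any occurrence of that word in `u` ends at a position `≥ i`
  have hg_min : ∀ i, i ≤ u.length → ∀ k, lps (u.take i) <+: u.drop k →
      i ≤ k + (lps (u.take i)).length := by
    intro i hi k hk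
    rcases Nat.eq_zero_or_pos i with rfl | hipos
    · omega
    have hl := htake_len i hi
    have hpne : u.take i ≠ [] := by
      intro h; rw [h] at hl; simp at hl; omega
    by_contra hcon
    push_neg at hcon
    have hkin : lps (u.take i) <+: (u.take i).drop k := by
      rw [List.drop_take, List.prefix_iff_eq_take, List.take_take]
      have hmin : (lps (u.take i)).length ⊓ (i - k) = (lps (u.take i)).length := by
        rw [min_eq_left]; omega
      rw [hmin]
      exact List.prefix_iff_eq_take.mp hk
    have := lps_occ hpne hkin
    rw [htake_len i hi] at this
    have hlen := hg_len i hi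
    omega
  -- injectivity
  have key : ∀ i j, i ≤ u.length → j ≤ u.length → i < j →
      lps (u.take i) ≠ lps (u.take j) := by
    intro i j hi hj hij heq
    have h1 := hg_occ i hi
    rw [heq] at h1
    have h2 := hg_min j hj _ h1
    have h3 := hg_len i hi
    rw [heq] at h3
    omega
  have hinj : Set.InjOn (fun i => lps (u.take i)) ↑(Finset.range (u.length + 1)) := by
    intro i hi j hj hij
    have hi' : i ≤ u.length := by
      have := Finset.mem_range.mp (Finset.mem_coe.mp hi); omega
    have hj' : j ≤ u.length := by
      have := Finset.mem_range.mp (Finset.mem_coe.mp hj); omega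
    rcases lt_trichotomy i j with h | h | h
    · exact absurd hij (key i j hi' hj' h)
    · exact h
    · exact absurd hij.symm (key j i hj' hi' h)
  -- the image is exactly the set of privileged factors
  have hset : ∀ v : List A, (v <:+: u ∧ IsPrivileged v) ↔
      v ∈ (Finset.range (u.length + 1)).image (fun i => lps (u.take i)) := by
    intro v
    constructor
    · rintro ⟨hinf, hpriv⟩
      by_cases hv : v = []
      · subst hv
        exact Finset.mem_image.mpr ⟨0, Finset.mem_range.mpr (Nat.succ_pos _),
          by simp [lps_nil]⟩
      · have hex : ∃ k, v <+: u.drop k := by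
          obtain ⟨s, t, hst⟩ := hinf
          refine ⟨s.length, ?_⟩
          rw [← hst, List.append_assoc, List.drop_left]
          exact List.prefix_append _ _
        have hocc0 : v <+: u.drop (Nat.find hex) := Nat.find_spec hex
        have hin : Nat.find hex + v.length ≤ u.length := occ_add_le hv hocc0
        set i := Nat.find hex + v.length with hidef
        have hvsuf : v <:+ u.take i := by
          rw [List.suffix_iff_eq_drop, htake_len i hin]
          have he1 : i - v.length = Nat.find hex := by omega
          rw [he1, List.drop_take]
          have he2 : i - Nat.find hex = v.length := by omega
          rw [he2]
          exact List.prefix_iff_eq_take.mp hocc0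
        have hlen_le : v.length ≤ (lps (u.take i)).length := lps_max hpriv hvsuf
        have hvg : v <:+ lps (u.take i) :=
          suffix_of_suffix_le hvsuf (lps_suffix _) hlen_le
        have hvp : v <+: lps (u.take i) :=
          priv_prefix_of_suffix (lps_priv _) hpriv hvg
        have hvocc : v <+: u.drop (i - (lps (u.take i)).length) :=
          hvp.trans (hg_occ i hin)
        have hmin := Nat.find_min' hex hvocc
        have hglen := hg_len i hin
        have hveq : v = lps (u.take i) := hvp.eq_of_length (by omega)
        exact Finset.mem_image.mpr ⟨i, Finset.mem_range.mpr (by omega), hveq.symm⟩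
    · intro hv
      obtain ⟨i, hi, rfl⟩ := Finset.mem_image.mp hv
      exact ⟨((lps_suffix (u.take i)).isInfix).trans (List.take_prefix i u).isInfix,
        lps_priv _⟩
  calc Nat.card {v : List A // v <:+: u ∧ IsPrivileged v}
      = Nat.card {v : List A //
          v ∈ (Finset.range (u.length + 1)).image (fun i => lps (u.take i))} :=
        Nat.card_congr (Equiv.subtypeEquivRight fun v => hset v)
    _ = ((Finset.range (u.length + 1)).image (fun i => lps (u.take i))).card :=
        Nat.card_eq_finsetCard _
    _ = u.length + 1 := by
        rw [Finset.card_image_of_injOn hinj, Finset.card_range]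

end Arx1111
end
end
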